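/- Let $\Lambda$ be a finite dimensional algebra over a field with finite little finitistic dimension. If $\Lambda$ has infinite dominant dimension, i.e., there is a minimal injective resolution $0 \to {}_\Lambda\Lambda \to Q_0 \to Q_1 \to \cdots$ of the left regular module in which every term $Q_i$ is projective, then $\Lambda$ is self-injective (quasi-Frobenius): the left regular module ${}_\Lambda\Lambda$ is injective. -/

import Mathlib

set_option synthInstance.maxHeartbeats 1000000
set_option maxHeartbeats 1000000
set_option linter.unusedSectionVars false

universe u v

/-- `pdLE R n M` means the left `R`-module `M` has projective dimension at most `n`,
i.e. it admits a projective resolution of length `n`. -/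
def pdLE (R : Type u) [Ring R] : ℕ → (M : Type v) → [AddCommGroup M] → [Module R M] → Prop
  | 0, M, _, _ => Module.Projective R M
  | n + 1, M, _, _ =>
      ∃ (P : Type v) (_ : AddCommGroup P) (_ : Module R P) (f : P →ₗ[R] M),
        Module.Projective R P ∧ Function.Surjective f ∧ pdLE R n (LinearMap.ker f)

/-- `M` has finite projective dimension over `R`. -/
def HasFinitePd (R : Type u) [Ring R] (M : Type v) [AddCommGroup M] [Module R M] : Prop :=
  ∃ n, pdLE R n M

section PDLemmas

variable {R : Type u} [Ring R]

theorem pdLE_congr : ∀ (n : ℕ) {M N : Type v} [AddCommGroup M] [Module R M]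
    [AddCommGroup N] [Module R N], (M ≃ₗ[R] N) → pdLE R n M → pdLE R n N
  | 0, M, N, _, _, _, _, e, h => by
      have : Module.Projective R M := h
      exact Module.Projective.of_equiv e
  | n + 1, M, N, _, _, _, _, e, h => by
      obtain ⟨P, iP, mP, g, hP, hs, hk⟩ := h
      refine ⟨P, iP, mP, e.toLinearMap.comp g, hP, e.surjective.comp hs, ?_⟩
      have hker : LinearMap.ker (e.toLinearMap.comp g) = LinearMap.ker g := by
        rw [LinearMap.ker_comp, LinearEquiv.ker, Submodule.comap_bot]
      rw [hker]
      exact hk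

theorem split_equiv {X P : Type v} [AddCommGroup X] [Module R X] [AddCommGroup P] [Module R P]
    [Module.Projective R P] (g : X →ₗ[R] P) (hg : Function.Surjective g) :
    Nonempty (X ≃ₗ[R] (LinearMap.ker g × P)) := by
  obtain ⟨s, hs⟩ := Module.projective_lifting_property g LinearMap.id hg
  have hsp : ∀ p, g (s p) = p := fun p => LinearMap.congr_fun hs p
  have hmem : ∀ x, ((LinearMap.id : X →ₗ[R] X) - s.comp g) x ∈ LinearMap.ker g := by
    intro x
    simp [LinearMap.mem_ker, map_sub, hsp]
  refine ⟨LinearEquiv.ofLinear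
    (LinearMap.prod (LinearMap.codRestrict (LinearMap.ker g)
      ((LinearMap.id : X →ₗ[R] X) - s.comp g) hmem) g)
    ((LinearMap.ker g).subtype.comp (LinearMap.fst R _ _) + s.comp (LinearMap.snd R _ _)) ?_ ?_⟩
  · apply LinearMap.ext
    rintro ⟨c, p⟩
    have hc : g (c : X) = 0 := c.2
    refine Prod.ext (Subtype.ext ?_) ?_
    · simp [hsp, hc]
    · simp [hsp, hc]
  · apply LinearMap.ext
    intro x
    simp

theorem pdLE_prod : ∀ (n : ℕ) {A P : Type v} [AddCommGroup A] [Module R A]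
    [AddCommGroup P] [Module R P], pdLE R n A → Module.Projective R P → pdLE R n (A × P)
  | 0, A, P, _, _, _, _, h, hP => by
      have : Module.Projective R A := h
      show Module.Projective R (A × P)
      infer_instance
  | n + 1, A, P, _, _, _, _, h, hP => by
      obtain ⟨P', iP', mP', g, hP', hs, hk⟩ := h
      refine ⟨P' × P, inferInstance, inferInstance, g.prodMap LinearMap.id,
        inferInstance, hs.prodMap Function.surjective_id, ?_⟩
      refine pdLE_congr n ?_ hk
      refine LinearEquiv.ofLinear
        (LinearMap.codRestrict _ ((LinearMap.inl R P' P).comp (LinearMap.ker g).subtype) ?_)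
        (LinearMap.codRestrict _ ((LinearMap.fst R P' P).comp (LinearMap.ker _).subtype) ?_) ?_ ?_
      · rintro ⟨c, hc⟩
        rw [LinearMap.mem_ker] at hc ⊢
        simp [hc]
      · rintro ⟨⟨a, b⟩, hab⟩
        rw [LinearMap.mem_ker] at hab ⊢
        simp only [LinearMap.prodMap_apply, LinearMap.id_apply, Prod.mk_eq_zero] at hab
        simpa using hab.1
      · apply LinearMap.ext
        rintro ⟨⟨a, b⟩, hab⟩
        rw [LinearMap.mem_ker] at hab
        simp only [LinearMap.prodMap_apply, LinearMap.id_apply, Prod.mk_eq_zero] at hab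
        apply Subtype.ext
        simp [hab.2.symm]
      · apply LinearMap.ext
        rintro ⟨c, hc⟩
        apply Subtype.ext
        simp

theorem pdLE_of_prod : ∀ (n : ℕ) {A P : Type v} [AddCommGroup A] [Module R A]
    [AddCommGroup P] [Module R P], pdLE R n (A × P) → Module.Projective R P → pdLE R n A
  | 0, A, P, _, _, _, _, h, hP => by
      have : Module.Projective R (A × P) := h
      exact Module.Projective.of_split (LinearMap.inl R A P) (LinearMap.fst R A P) (by ext; simp)
  | n + 1, A, P, _, _, _, _, h, hP => by
      obtain ⟨P'', iP'', mP'', g, hP'', hs, hk⟩ := h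
      set g₁ : P'' →ₗ[R] A := (LinearMap.fst R A P).comp g with hg₁
      have hs₁ : Function.Surjective g₁ := by
        intro a
        obtain ⟨y, hy⟩ := hs (a, 0)
        exact ⟨y, by simp [hg₁, hy]⟩
      refine ⟨P'', iP'', mP'', g₁, hP'', hs₁, ?_⟩
      set h2 : LinearMap.ker g₁ →ₗ[R] P :=
        (LinearMap.snd R A P).comp (g.comp (LinearMap.ker g₁).subtype) with hh2
      have hs2 : Function.Surjective h2 := by
        intro p
        obtain ⟨y, hy⟩ := hs (0, p)
        have hy1 : y ∈ LinearMap.ker g₁ := by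
          rw [LinearMap.mem_ker, hg₁, LinearMap.comp_apply, hy]; rfl
        exact ⟨⟨y, hy1⟩, by simp [hh2, hy]⟩
      haveI := hP
      obtain ⟨e⟩ := split_equiv h2 hs2
      have e2 : (LinearMap.ker h2) ≃ₗ[R] (LinearMap.ker g) := by
        refine LinearEquiv.ofLinear
          (LinearMap.codRestrict _ ((LinearMap.ker g₁).subtype.comp (LinearMap.ker h2).subtype) ?_)
          (LinearMap.codRestrict _ (LinearMap.codRestrict _ (LinearMap.ker g).subtype ?_) ?_) ?_ ?_
        · rintro ⟨⟨x, hx1⟩, hx2⟩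
          rw [LinearMap.mem_ker] at hx1 hx2 ⊢
          simp only [hh2, LinearMap.comp_apply, Submodule.coe_subtype, hg₁] at hx1 hx2 ⊢
          exact Prod.ext hx1 hx2
        · rintro ⟨y, hy⟩
          rw [LinearMap.mem_ker] at hy ⊢
          simp [hg₁, hy]
        · rintro ⟨y, hy⟩
          rw [LinearMap.mem_ker] at hy ⊢
          simp [hh2, hy]
        · apply LinearMap.ext
          rintro ⟨y, hy⟩
          apply Subtype.ext
          simp
        · apply LinearMap.ext
          rintro ⟨⟨x, hx1⟩, hx2⟩
          apply Subtype.ext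
          apply Subtype.ext
          simp
      exact pdLE_congr n e.symm (pdLE_prod n (pdLE_congr n e2.symm hk) hP)

theorem pdLE_ker (n : ℕ) {M P : Type v} [AddCommGroup M] [Module R M]
    [AddCommGroup P] [Module R P] [hP : Module.Projective R P]
    (hM : pdLE R (n + 1) M) (g : P →ₗ[R] M) (hg : Function.Surjective g) :
    pdLE R n (LinearMap.ker g) := by
  obtain ⟨P', iP', mP', f', hP', hs', hk'⟩ := hM
  set φ : P × P' →ₗ[R] M := g.comp (LinearMap.fst R P P') - f'.comp (LinearMap.snd R P P')
    with hφ
  have memX : ∀ p p', ((p, p') ∈ LinearMap.ker φ) ↔ g p = f' p' := by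
    intro p p'
    rw [LinearMap.mem_ker, hφ]
    simp [sub_eq_zero]
  set π : LinearMap.ker φ →ₗ[R] P := (LinearMap.fst R P P').comp (LinearMap.ker φ).subtype
    with hπ
  set π' : LinearMap.ker φ →ₗ[R] P' := (LinearMap.snd R P P').comp (LinearMap.ker φ).subtype
    with hπ'
  have hπs : Function.Surjective π := by
    intro p
    obtain ⟨p', hp'⟩ := hs' (g p)
    exact ⟨⟨(p, p'), (memX p p').mpr hp'.symm⟩, rfl⟩
  have hπ's : Function.Surjective π' := by
    intro p'
    obtain ⟨p, hp⟩ := hg (f' p')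
    exact ⟨⟨(p, p'), (memX p p').mpr hp⟩, rfl⟩
  have eπ : (LinearMap.ker π) ≃ₗ[R] (LinearMap.ker f') := by
    refine LinearEquiv.ofLinear
      (LinearMap.codRestrict _ ((LinearMap.snd R P P').comp
        ((LinearMap.ker φ).subtype.comp (LinearMap.ker π).subtype)) ?_)
      (LinearMap.codRestrict _ (LinearMap.codRestrict _
        ((LinearMap.inr R P P').comp (LinearMap.ker f').subtype) ?_) ?_) ?_ ?_
    · rintro ⟨⟨⟨a, b⟩, hX0⟩, hk0⟩
      rw [(memX a b)] at hX0
      rw [LinearMap.mem_ker] at hk0 ⊢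
      have ha : a = 0 := by simpa [hπ] using hk0
      simp only [LinearMap.comp_apply, Submodule.coe_subtype, LinearMap.snd_apply]
      rw [← hX0, ha, map_zero]
    · rintro ⟨y, hy⟩
      rw [LinearMap.mem_ker] at hy
      rw [LinearMap.comp_apply]
      exact (memX _ _).mpr (by simp [hy])
    · rintro ⟨y, hy⟩
      rw [LinearMap.mem_ker]
      rfl
    · apply LinearMap.ext
      rintro ⟨y, hy⟩
      apply Subtype.ext
      simp
    · apply LinearMap.ext
      rintro ⟨⟨⟨a, b⟩, hX⟩, hk0⟩
      have ha : a = 0 := by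
        rw [LinearMap.mem_ker] at hk0
        simpa [hπ] using hk0
      apply Subtype.ext
      apply Subtype.ext
      simp [ha]
  have eπ' : (LinearMap.ker π') ≃ₗ[R] (LinearMap.ker g) := by
    refine LinearEquiv.ofLinear
      (LinearMap.codRestrict _ ((LinearMap.fst R P P').comp
        ((LinearMap.ker φ).subtype.comp (LinearMap.ker π').subtype)) ?_)
      (LinearMap.codRestrict _ (LinearMap.codRestrict _
        ((LinearMap.inl R P P').comp (LinearMap.ker g).subtype) ?_) ?_) ?_ ?_
    · rintro ⟨⟨⟨a, b⟩, hX⟩, hk0⟩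
      rw [(memX a b)] at hX
      rw [LinearMap.mem_ker] at hk0 ⊢
      simp only [hπ', LinearMap.comp_apply, Submodule.coe_subtype] at hk0
      simp only [LinearMap.comp_apply, Submodule.coe_subtype]
      simp only [LinearMap.snd_apply, LinearMap.fst_apply] at hk0 ⊢
      rw [hk0, map_zero] at hX
      exact hX
    · rintro ⟨y, hy⟩
      rw [LinearMap.mem_ker] at hy
      rw [LinearMap.comp_apply]
      exact (memX _ _).mpr (by simp [hy])
    · rintro ⟨y, hy⟩
      rw [LinearMap.mem_ker]
      rfl
    · apply LinearMap.ext
      rintro ⟨y, hy⟩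
      apply Subtype.ext
      simp
    · apply LinearMap.ext
      rintro ⟨⟨⟨a, b⟩, hX⟩, hk0⟩
      have hb : b = 0 := by
        rw [LinearMap.mem_ker] at hk0
        simpa [hπ'] using hk0
      apply Subtype.ext
      apply Subtype.ext
      simp [hb]
  obtain ⟨e1⟩ := split_equiv π hπs
  haveI := hP'
  obtain ⟨e2⟩ := split_equiv π' hπ's
  have h1 : pdLE R n (LinearMap.ker π) := by exact pdLE_congr n eπ.symm hk'
  have h2 : pdLE R n (↥(LinearMap.ker π) × P) := pdLE_prod n h1 hP
  have h3 : pdLE R n (LinearMap.ker φ) := by exact pdLE_congr n e1.symm h2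
  have h4 : pdLE R n (↥(LinearMap.ker π') × P') := by exact pdLE_congr n e2 h3
  have h5 : pdLE R n (LinearMap.ker π') := pdLE_of_prod n h4 hP'
  exact pdLE_congr n eπ' h5

section Rad
variable {Λ : Type u} [Ring Λ]

theorem jac_le_max {m : Ideal Λ} (hm : m.IsMaximal) : Ideal.jacobson (⊥ : Ideal Λ) ≤ m :=
  sInf_le ⟨bot_le, hm⟩

theorem jac_mul_right {x : Λ} (hx : x ∈ Ideal.jacobson (⊥ : Ideal Λ)) (r : Λ) :
    x * r ∈ Ideal.jacobson (⊥ : Ideal Λ) := by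
  rw [Ideal.jacobson, Submodule.mem_sInf]
  rintro m ⟨-, hm⟩
  by_cases hr : r ∈ m
  · simpa using m.smul_mem x hr
  · haveI : IsSimpleModule Λ (Λ ⧸ m) :=
      isSimpleModule_iff_isCoatom.mpr (Ideal.isMaximal_def.mp hm)
    have hrne : (Submodule.Quotient.mk r : Λ ⧸ m) ≠ 0 :=
      fun h => hr ((Submodule.Quotient.mk_eq_zero m).mp h)
    have hmax := IsSimpleModule.ker_toSpanSingleton_isMaximal Λ hrne
    have hxk : x ∈ LinearMap.ker (LinearMap.toSpanSingleton Λ (Λ ⧸ m)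
        (Submodule.Quotient.mk r)) := jac_le_max hmax hx
    rw [LinearMap.mem_ker, LinearMap.toSpanSingleton_apply] at hxk
    have : (Submodule.Quotient.mk (x * r) : Λ ⧸ m) = 0 := by
      rw [← hxk]; rfl
    exact (Submodule.Quotient.mk_eq_zero m).mp this

theorem jac_left_inv {x : Λ} (hx : x ∈ Ideal.jacobson (⊥ : Ideal Λ)) :
    ∃ u : Λ, u * (1 - x) = 1 := by
  by_cases h : Ideal.span {(1 : Λ) - x} = ⊤
  · have h1 : (1 : Λ) ∈ Ideal.span {(1 : Λ) - x} := h ▸ Submodule.mem_top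
    obtain ⟨u, hu⟩ := Submodule.mem_span_singleton.mp h1
    exact ⟨u, hu⟩
  · obtain ⟨m, hm, hle⟩ := Ideal.exists_le_maximal _ h
    have h1x : (1 : Λ) - x ∈ m := hle (Ideal.subset_span rfl)
    have hxm : x ∈ m := jac_le_max hm hx
    have h1 : (1 : Λ) ∈ m := by simpa using m.add_mem h1x hxm
    exact absurd ((Ideal.eq_top_iff_one m).mpr h1) hm.ne_top

end Rad

section RadAlg
variable (k : Type u) (Λ : Type u) [Field k] [Ring Λ] [Algebra k Λ] [FiniteDimensional k Λ]

/-- The Jacobson radical, as a `k`-submodule of `Λ`. -/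
noncomputable def Jk : Submodule k Λ :=
  Submodule.restrictScalars k (Ideal.jacobson (⊥ : Ideal Λ))

theorem Jk_mem {x : Λ} : x ∈ Jk k Λ ↔ x ∈ Ideal.jacobson (⊥ : Ideal Λ) := Iff.rfl

theorem Jk_pow_mul_right : ∀ (i : ℕ) {x : Λ}, x ∈ (Jk k Λ) ^ (i + 1) → ∀ r : Λ,
    x * r ∈ (Jk k Λ) ^ (i + 1)
  | 0, x, hx, r => by
      rw [pow_one] at hx ⊢
      exact jac_mul_right hx r
  | i + 1, x, hx, r => by
      rw [pow_succ] at hx ⊢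
      refine Submodule.mul_induction_on hx (fun a ha b hb => ?_) (fun y z hy hz => ?_)
      · rw [mul_assoc]
        exact Submodule.mul_mem_mul ha (jac_mul_right hb r)
      · rw [add_mul]
        exact Submodule.add_mem _ hy hz

theorem Jk_pow_mul_left : ∀ (i : ℕ) {x : Λ}, x ∈ (Jk k Λ) ^ (i + 1) → ∀ r : Λ,
    r * x ∈ (Jk k Λ) ^ (i + 1)
  | 0, x, hx, r => by
      rw [pow_one] at hx ⊢
      exact (Jk_mem k Λ).mpr (by simpa using Ideal.mul_mem_left _ r ((Jk_mem k Λ).mp hx))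
  | i + 1, x, hx, r => by
      rw [pow_succ] at hx ⊢
      refine Submodule.mul_induction_on hx (fun a ha b hb => ?_) (fun y z hy hz => ?_)
      · rw [← mul_assoc]
        exact Submodule.mul_mem_mul (Jk_pow_mul_left i ha r) hb
      · rw [mul_add]
        exact Submodule.add_mem _ hy hz

theorem Jk_pow_antitone (i : ℕ) : (Jk k Λ) ^ (i + 2) ≤ (Jk k Λ) ^ (i + 1) := by
  rw [pow_succ]
  refine Submodule.mul_le.mpr (fun a ha b hb => ?_)
  exact Jk_pow_mul_right k Λ i ha b

/-- Nakayama: representation of elements of `J * span Λ s`. -/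
theorem jac_rep (s : Finset Λ) {y : Λ}
    (hy : y ∈ (Jk k Λ) * Submodule.restrictScalars k (Submodule.span Λ (↑s : Set Λ))) :
    ∃ c : Λ → Λ, (∀ t, c t ∈ Ideal.jacobson (⊥ : Ideal Λ)) ∧ y = ∑ t ∈ s, c t * t := by
  classical
  have key : ∀ z ∈ Submodule.span Λ (↑s : Set Λ), ∀ x ∈ Ideal.jacobson (⊥ : Ideal Λ),
      ∃ c : Λ → Λ, (∀ t, c t ∈ Ideal.jacobson (⊥ : Ideal Λ)) ∧ x * z = ∑ t ∈ s, c t * t := by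
    intro z hz
    induction hz using Submodule.span_induction with
    | mem t ht =>
        intro x hx
        refine ⟨fun t' => if t' = t then x else 0, fun t' => ?_, ?_⟩
        · by_cases h : t' = t <;> simp [h, hx, Submodule.zero_mem]
        · have : ∀ t' ∈ s, (fun t' => if t' = t then x else 0) t' * t'
              = if t' = t then x * t else 0 := by
            intro t' _
            by_cases h : t' = t <;> simp [h]
          rw [Finset.sum_congr rfl this, Finset.sum_ite_eq' s t (fun _ => x * t)]
          rw [if_pos (Finset.mem_coe.mp ht)]
    | zero =>
        intro x hx
        exact ⟨0, fun t => by simp [Submodule.zero_mem], by simp⟩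
    | add y z hy hz ihy ihz =>
        intro x hx
        obtain ⟨c₁, hc₁, he₁⟩ := ihy x hx
        obtain ⟨c₂, hc₂, he₂⟩ := ihz x hx
        refine ⟨c₁ + c₂, fun t => Submodule.add_mem _ (hc₁ t) (hc₂ t), ?_⟩
        rw [mul_add, he₁, he₂, ← Finset.sum_add_distrib]
        simp [add_mul]
    | smul a z hz ihz =>
        intro x hx
        obtain ⟨c, hc, he⟩ := ihz (x * a) (jac_mul_right hx a)
        refine ⟨c, hc, ?_⟩
        rw [smul_eq_mul, ← mul_assoc, he]
  refine Submodule.mul_induction_on hy (fun x hx z hz => key z hz x hx)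
    (fun y z ⟨c₁, hc₁, he₁⟩ ⟨c₂, hc₂, he₂⟩ =>
      ⟨c₁ + c₂, fun t => Submodule.add_mem _ (hc₁ t) (hc₂ t), by
        rw [he₁, he₂, ← Finset.sum_add_distrib]; simp [add_mul]⟩)


theorem jac_pow_eq_bot : ∃ n : ℕ, (Jk k Λ) ^ (n + 1) = ⊥ := by
  classical
  have hmono : ∀ i m : ℕ, (Jk k Λ) ^ (i + 1 + m) ≤ (Jk k Λ) ^ (i + 1) := by
    intro i m
    induction m with
    | zero => exact le_rfl
    | succ m ih =>
        have e1 : i + 1 + (m + 1) = (i + m) + 2 := by omega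
        have e2 : i + 1 + m = (i + m) + 1 := by omega
        rw [e1]
        rw [e2] at ih
        exact le_trans (Jk_pow_antitone k Λ (i + m)) ih
  have hOrd : Monotone (fun i : ℕ => OrderDual.toDual ((Jk k Λ) ^ (i + 1))) := by
    intro a b hab
    obtain ⟨m, rfl⟩ := Nat.exists_eq_add_of_le hab
    refine OrderDual.toDual_le_toDual.mpr ?_
    have e : a + m + 1 = a + 1 + m := by omega
    rw [e]
    exact hmono a m
  obtain ⟨n, hn⟩ := IsArtinian.monotone_stabilizes (R := k) (M := Λ) ⟨_, hOrd⟩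
  have key : (Jk k Λ) ^ (n + 1) = (Jk k Λ) * (Jk k Λ) ^ (n + 1) := by
    have h2 := hn (n + 1) (Nat.le_succ n)
    have h2' : (Jk k Λ) ^ (n + 1) = (Jk k Λ) ^ (n + 2) := congrArg OrderDual.ofDual h2
    conv_lhs => rw [h2', pow_succ']
  set W := (Jk k Λ) ^ (n + 1) with hW
  have main : ∀ (m : ℕ) (s : Finset Λ), s.card ≤ m → (↑s : Set Λ) ⊆ (W : Set Λ) →
      (W : Set Λ) ⊆ (Submodule.span Λ (↑s : Set Λ) : Set Λ) → W = ⊥ := by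
    intro m
    induction m with
    | zero =>
        intro s hcard _ hspan
        have hs : s = ∅ := Finset.card_eq_zero.mp (Nat.le_zero.mp hcard)
        subst hs
        rw [eq_bot_iff]
        intro x hx
        have := hspan hx
        simp only [Finset.coe_empty, Submodule.span_empty] at this
        simpa using this
    | succ m ih =>
        intro s hcard hsub hspan
        rcases s.eq_empty_or_nonempty with rfl | ⟨w, hw⟩
        · rw [eq_bot_iff]
          intro x hx
          have := hspan hx
          simp only [Finset.coe_empty, Submodule.span_empty] at this
          simpa using this
        · have hwW : w ∈ W := hsub hw
          have hWle : W ≤ Submodule.restrictScalars k (Submodule.span Λ (↑s : Set Λ)) :=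
            fun x hx => hspan hx
          have hw' : w ∈ (Jk k Λ) * Submodule.restrictScalars k (Submodule.span Λ (↑s : Set Λ)) := by
            have : w ∈ (Jk k Λ) * W := by rw [← key]; exact hwW
            exact mul_le_mul_right hWle _ this
          obtain ⟨c, hc, hsum⟩ := jac_rep k Λ s hw'
          obtain ⟨u, hu⟩ := jac_left_inv (hc w)
          have herase : (1 - c w) * w = ∑ t ∈ s.erase w, c t * t := by
            rw [sub_mul, one_mul]
            have h := Finset.sum_erase_add s (fun t => c t * t) hw
            rw [← hsum] at h
            exact (eq_sub_of_add_eq h).symm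
          set s' : Finset Λ := s.erase w with hs'
          have hwspan : w ∈ Submodule.span Λ (↑s' : Set Λ) := by
            have hw3 : w = ∑ t ∈ s', (u * c t) * t := by
              calc w = (u * (1 - c w)) * w := by rw [hu, one_mul]
              _ = u * ((1 - c w) * w) := by rw [mul_assoc]
              _ = u * ∑ t ∈ s', c t * t := by rw [herase]
              _ = ∑ t ∈ s', (u * c t) * t := by
                  rw [Finset.mul_sum]
                  exact Finset.sum_congr rfl fun t _ => by rw [mul_assoc]
            rw [hw3]
            refine Submodule.sum_mem _ fun t ht => ?_
            have hts : t ∈ Submodule.span Λ (↑s' : Set Λ) :=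
              Submodule.subset_span (Finset.mem_coe.mpr ht)
            have := Submodule.smul_mem _ (u * c t) hts
            rwa [smul_eq_mul] at this
          have hse : (W : Set Λ) ⊆ (Submodule.span Λ (↑s' : Set Λ) : Set Λ) := by
            intro x hx
            have hx1 : x ∈ Submodule.span Λ (↑s : Set Λ) := hspan hx
            have hle2 : Submodule.span Λ (↑s : Set Λ) ≤
                Submodule.span Λ (↑s' : Set Λ) := by
              rw [Submodule.span_le]
              intro t ht
              by_cases h : t = w
              · subst h; exact hwspan
              · exact Submodule.subset_span
                  (Finset.mem_coe.mpr (Finset.mem_erase.mpr ⟨h, Finset.mem_coe.mp ht⟩))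
            exact hle2 hx1
          refine ih s' ?_ (fun x hx => hsub (Finset.mem_coe.mpr
            (Finset.mem_of_mem_erase (Finset.mem_coe.mp hx)))) hse
          have := Finset.card_erase_of_mem hw
          rw [hs']
          omega
  have hfg : W.FG := IsNoetherian.noetherian W
  obtain ⟨S, hS⟩ := hfg
  refine ⟨n, main S.card S le_rfl ?_ ?_⟩
  · intro x hx
    rw [← hS]
    exact Submodule.subset_span hx
  · intro x hx
    rw [← hS] at hx
    exact Submodule.span_le_restrictScalars k Λ _ hx



include k in
theorem quotJac_semisimple :
    IsSemisimpleModule Λ (Λ ⧸ (Ideal.jacobson (⊥ : Ideal Λ) : Ideal Λ)) := by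
  classical
  haveI : IsArtinian Λ Λ := isArtinian_of_tower k inferInstance
  set F : Set (Ideal Λ) :=
    {V | ∃ s : Finset (Ideal Λ), (∀ I ∈ s, I.IsMaximal) ∧ V = s.inf id} with hF
  have hFne : F.Nonempty := ⟨⊤, ∅, by simp, by simp⟩
  obtain ⟨V₀, hV₀F, hmin⟩ := IsArtinian.set_has_minimal F hFne
  obtain ⟨s₀, hs₀max, rfl⟩ := hV₀F
  have hle : ∀ m : Ideal Λ, m.IsMaximal → s₀.inf id ≤ m := by
    intro m hm
    by_contra hc
    have hFm : (insert m s₀).inf id ∈ F :=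
      ⟨insert m s₀, fun I hI => by
        rcases Finset.mem_insert.mp hI with rfl | hI
        · exact hm
        · exact hs₀max I hI, rfl⟩
    have hlt : (insert m s₀).inf id < s₀.inf id := by
      rw [Finset.inf_insert]
      refine lt_of_le_of_ne inf_le_right (fun h => hc ?_)
      rw [← h]
      exact inf_le_left
    exact hmin _ hFm hlt
  have hJ : s₀.inf id = Ideal.jacobson (⊥ : Ideal Λ) := by
    refine le_antisymm (le_sInf fun b hb => hle b hb.2) (Finset.le_inf fun I hI => ?_)
    exact jac_le_max (hs₀max I hI)
  haveI hsimple : ∀ I : {x // x ∈ s₀}, IsSimpleModule Λ (Λ ⧸ (I.1 : Ideal Λ)) := fun I =>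
    isSimpleModule_iff_isCoatom.mpr (Ideal.isMaximal_def.mp (hs₀max I.1 I.2))
  set Φ : Λ →ₗ[Λ] ((I : {x // x ∈ s₀}) → Λ ⧸ (I.1 : Ideal Λ)) :=
    LinearMap.pi (fun I => (I.1 : Ideal Λ).mkQ) with hΦ
  have hker : LinearMap.ker Φ = Ideal.jacobson (⊥ : Ideal Λ) := by
    ext x
    rw [LinearMap.mem_ker, ← hJ]
    constructor
    · intro h
      rw [Submodule.mem_finsetInf]
      intro I hI
      have := congrFun h ⟨I, hI⟩
      simpa [hΦ, Submodule.Quotient.mk_eq_zero] using this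
    · intro h
      funext I
      have : x ∈ (I.1 : Ideal Λ) := Submodule.mem_finsetInf.mp h I.1 I.2
      simpa [hΦ, Submodule.Quotient.mk_eq_zero] using this
  haveI hPi : IsSemisimpleModule Λ ((I : {x // x ∈ s₀}) → Λ ⧸ (I.1 : Ideal Λ)) := by
    refine isSemisimpleModule_of_isSemisimpleModule_submodule'
      (p := fun I => LinearMap.range (LinearMap.single Λ _ I)) (fun I => ?_)
      (LinearMap.iSup_range_single Λ _)
    have hinj : Function.Injective (LinearMap.single Λ (fun I : {x // x ∈ s₀} =>
        Λ ⧸ (I.1 : Ideal Λ)) I) := by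
      rw [LinearMap.coe_single]
      exact Pi.single_injective _
    haveI : IsSimpleModule Λ (LinearMap.range (LinearMap.single Λ (fun I : {x // x ∈ s₀} =>
        Λ ⧸ (I.1 : Ideal Λ)) I)) :=
      IsSimpleModule.congr (LinearEquiv.ofInjective _ hinj).symm
    infer_instance
  have e : (Λ ⧸ (Ideal.jacobson (⊥ : Ideal Λ) : Ideal Λ)) ≃ₗ[Λ] LinearMap.range Φ :=
    (Submodule.quotEquivOfEq _ _ hker.symm).trans (LinearMap.quotKerEquivRange Φ)
  exact IsSemisimpleModule.congr (M := ↥(LinearMap.range Φ)) e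

end RadAlg

section Ess
variable (k Λ : Type u) [Field k] [Ring Λ] [Algebra k Λ] [FiniteDimensional k Λ]
variable (E : Type u) [AddCommGroup E] [Module Λ E] [Module k E] [IsScalarTower k Λ E]

theorem smul_comm_k (a : Λ) (c : k) (y : E) : a • (c • y) = c • (a • y) := by
  rw [← algebraMap_smul Λ c y, ← mul_smul, ← Algebra.commutes, mul_smul, algebraMap_smul]

include k in
theorem finite_of_essential (N : Submodule Λ E) (hN : Module.Finite Λ ↥N)
    (hess : ∀ C : Submodule Λ E, C ⊓ N = ⊥ → C = ⊥) : Module.Finite Λ E := by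
  classical
  haveI := hN
  -- the "socle-like" submodule killed by the radical
  set SΛ : Submodule Λ E :=
    { carrier := {x | ∀ a ∈ Ideal.jacobson (⊥ : Ideal Λ), a • x = 0}
      add_mem' := fun {x y} hx hy a ha => by rw [smul_add, hx a ha, hy a ha, add_zero]
      zero_mem' := fun a _ => smul_zero a
      smul_mem' := fun r x hx a ha => by
        rw [← mul_smul]
        exact hx (a * r) (jac_mul_right ha r) } with hSΛdef
  have memS : ∀ x : E, x ∈ SΛ ↔ ∀ a ∈ Ideal.jacobson (⊥ : Ideal Λ), a • x = 0 :=
    fun x => Iff.rfl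
  -- SΛ is semisimple
  haveI hSsemi : IsSemisimpleModule Λ ↥SΛ := by
    refine isSemisimpleModule_of_isSemisimpleModule_submodule'
      (p := fun x : ↥SΛ => Submodule.span Λ {x}) (fun x => ?_) ?_
    · set ψ := LinearMap.toSpanSingleton Λ ↥SΛ x with hψ
      have hJker : Ideal.jacobson (⊥ : Ideal Λ) ≤ LinearMap.ker ψ := fun a ha => by
        rw [LinearMap.mem_ker, hψ, LinearMap.toSpanSingleton_apply]
        exact Subtype.ext (x.2 a ha)
      haveI := quotJac_semisimple k Λ
      haveI h1 : IsSemisimpleModule Λ (Λ ⧸ LinearMap.ker ψ) := by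
        have e2 := Submodule.quotientQuotientEquivQuotient
          (Ideal.jacobson (⊥ : Ideal Λ)) (LinearMap.ker ψ) hJker
        exact IsSemisimpleModule.congr
          (M := ((Λ ⧸ (Ideal.jacobson (⊥ : Ideal Λ) : Ideal Λ)) ⧸
            Submodule.map (Ideal.jacobson (⊥ : Ideal Λ) : Ideal Λ).mkQ (LinearMap.ker ψ)))
          e2.symm
      have hspan : Submodule.span Λ {(x : ↥SΛ)} = LinearMap.range ψ :=
        LinearMap.span_singleton_eq_range Λ ↥SΛ x
      show IsSemisimpleModule Λ ↥(Submodule.span Λ ({x} : Set ↥SΛ))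
      rw [hspan]
      exact IsSemisimpleModule.congr (M := Λ ⧸ LinearMap.ker ψ)
        (LinearMap.quotKerEquivRange ψ).symm
    · rw [eq_top_iff]
      intro y _
      exact Submodule.mem_iSup_of_mem y (Submodule.mem_span_singleton_self y)
  -- SΛ ≤ N by essentiality
  have hSN : SΛ ≤ N := by
    set W' : Submodule Λ ↥SΛ := Submodule.comap SΛ.subtype N with hW'
    obtain ⟨C', hC'⟩ := exists_isCompl W'
    have hC : Submodule.map SΛ.subtype C' ⊓ N = ⊥ := by
      rw [eq_bot_iff]
      rintro x ⟨hx1, hx2⟩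
      obtain ⟨y, hyC, rfl⟩ := hx1
      have hyW : y ∈ W' := hx2
      have hy0 : y ∈ C' ⊓ W' := ⟨hyC, hyW⟩
      rw [hC'.symm.inf_eq_bot] at hy0
      simp only [Submodule.mem_bot] at hy0 ⊢
      rw [hy0]
      rfl
    have hCbot := hess _ hC
    have hC'bot : C' = ⊥ := by
      rw [eq_bot_iff]
      intro y hy
      have hmem : SΛ.subtype y ∈ Submodule.map SΛ.subtype C' := ⟨y, hy, rfl⟩
      rw [hCbot] at hmem
      simp only [Submodule.mem_bot] at hmem ⊢
      exact Subtype.ext hmem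
    have hW'top : W' = ⊤ := by
      have := hC'.symm.sup_eq_top
      rw [hC'bot, bot_sup_eq] at this
      exact this
    intro x hx
    have : (⟨x, hx⟩ : ↥SΛ) ∈ W' := hW'top ▸ Submodule.mem_top
    exact this
  -- the annihilator filtration over k
  obtain ⟨n, hn⟩ := jac_pow_eq_bot k Λ
  set A : ℕ → Submodule k E := fun i =>
    { carrier := {x | ∀ a ∈ (Jk k Λ) ^ i, a • x = 0}
      add_mem' := fun {x y} hx hy a ha => by rw [smul_add, hx a ha, hy a ha, add_zero]
      zero_mem' := fun a _ => smul_zero a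
      smul_mem' := fun c x hx a ha => by
        rw [smul_comm_k k Λ E a c x, hx a ha, smul_zero] } with hAdef
  have memA : ∀ (i : ℕ) (x : E), x ∈ A i ↔ ∀ a ∈ (Jk k Λ) ^ i, a • x = 0 :=
    fun i x => Iff.rfl
  -- A 1 is finite dimensional
  haveI hNk : FiniteDimensional k ↥N := Module.Finite.trans Λ ↥N
  haveI hNk' : FiniteDimensional k ↥(N.restrictScalars k) := hNk
  have hA1le : A 1 ≤ N.restrictScalars k := by
    intro x hx
    refine hSN ?_
    rw [memS]
    intro a ha
    exact (memA 1 x).mp hx a (by rwa [pow_one])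
  haveI hA1 : FiniteDimensional k ↥(A 1) := Submodule.finiteDimensional_of_le hA1le
  -- induction up the filtration
  have step : ∀ i : ℕ, FiniteDimensional k ↥(A i) → FiniteDimensional k ↥(A (i + 1)) := by
    intro i hfd
    obtain ⟨s, hs⟩ := (IsNoetherian.noetherian ((Jk k Λ) ^ i) : ((Jk k Λ) ^ i).FG)
    -- component maps
    have hmemA1 : ∀ (t : {x // x ∈ s}) (x : ↥(A (i + 1))), t.1 • (x : E) ∈ A 1 := by
      rintro t x
      rw [memA]
      intro a ha
      rw [pow_one] at ha
      rw [← mul_smul]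
      have hts : t.1 ∈ (Jk k Λ) ^ i := by
        rw [← hs]
        exact Submodule.subset_span t.2
      have hat : a * t.1 ∈ (Jk k Λ) ^ (i + 1) := by
        rw [pow_succ']
        exact Submodule.mul_mem_mul ha hts
      exact x.2 (a * t.1) hat
    set φ : ↥(A (i + 1)) →ₗ[k] ({x // x ∈ s} → ↥(A 1)) := LinearMap.pi (fun t =>
      { toFun := fun x => (⟨t.1 • (x : E), hmemA1 t x⟩ : ↥(A 1))
        map_add' := fun x y => Subtype.ext (by simp [smul_add])
        map_smul' := fun c x => Subtype.ext (by
          simp only [RingHom.id_apply, SetLike.val_smul]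
          exact smul_comm_k k Λ E t.1 c (x : E)) }) with hφ
    have hker : LinearMap.range (LinearMap.ker φ).subtype = LinearMap.ker φ :=
      Submodule.range_subtype _
    haveI hkerfd : FiniteDimensional k ↥(LinearMap.ker φ) := by
      have hmemAi : ∀ y : ↥(LinearMap.ker φ), ((y : ↥(A (i + 1))) : E) ∈ A i := by
        intro y
        rw [memA]
        have hy := y.2
        rw [LinearMap.mem_ker] at hy
        have hcomp : ∀ t : {x // x ∈ s}, t.1 • ((y : ↥(A (i + 1))) : E) = 0 := by
          intro t
          have := congrFun hy t
          exact congrArg Subtype.val this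
        -- the set of elements of Λ annihilating y is a k-submodule containing s
        set T : Submodule k Λ :=
          { carrier := {a | a • ((y : ↥(A (i + 1))) : E) = 0}
            add_mem' := fun {a b} hx hy2 => by
              rw [Set.mem_setOf_eq] at hx hy2 ⊢
              rw [add_smul, hx, hy2, add_zero]
            zero_mem' := by
              rw [Set.mem_setOf_eq, zero_smul]
            smul_mem' := fun c a ha => by
              rw [Set.mem_setOf_eq] at ha ⊢
              rw [smul_assoc, ha, smul_zero] } with hT
        have hsT : (Jk k Λ) ^ i ≤ T := by
          rw [← hs, Submodule.span_le]
          intro t ht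
          exact hcomp ⟨t, ht⟩
        intro a ha
        exact hsT ha
      refine FiniteDimensional.of_injective (LinearMap.codRestrict (A i)
        ((A (i + 1)).subtype.comp (LinearMap.ker φ).subtype) (fun y => hmemAi y)) ?_
      intro a b hab
      apply Subtype.ext
      apply Subtype.ext
      have := congrArg Subtype.val hab
      exact this
    haveI : IsNoetherian k ↥(LinearMap.ker φ) := IsNoetherian.iff_fg.mpr hkerfd
    haveI : IsNoetherian k ({x // x ∈ s} → ↥(A 1)) := by
      haveI : FiniteDimensional k ({x // x ∈ s} → ↥(A 1)) := by infer_instance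
      exact IsNoetherian.iff_fg.mpr this
    have := isNoetherian_of_range_eq_ker (LinearMap.ker φ).subtype φ hker
    exact IsNoetherian.iff_fg.mp this
  have hall : ∀ i : ℕ, FiniteDimensional k ↥(A i) → FiniteDimensional k ↥(A 1) → True := fun _ _ _ => trivial
  have htop : A (n + 1) = ⊤ := by
    rw [eq_top_iff]
    intro x _
    rw [memA]
    intro a ha
    rw [hn] at ha
    simp only [Submodule.mem_bot] at ha
    rw [ha, zero_smul]
  haveI hfinal : FiniteDimensional k ↥(A (n + 1)) := by
    have : ∀ m : ℕ, FiniteDimensional k ↥(A (m + 1)) := by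
      intro m
      induction m with
      | zero => exact hA1
      | succ m ih => exact step (m + 1) ih
    exact this n
  haveI hEk : FiniteDimensional k E := by
    rw [htop] at hfinal
    exact Module.Finite.equiv (Submodule.topEquiv (R := k) (M := E))
  exact Module.Finite.of_restrictScalars_finite k Λ E

end Ess

theorem Module.Injective.of_retract {R : Type u} [Ring R] {Q M : Type v} [AddCommGroup Q]
    [Module R Q] [AddCommGroup M] [Module R M] (hQ : Module.Injective R Q)
    (i : M →ₗ[R] Q) (r : Q →ₗ[R] M) (hr : r.comp i = LinearMap.id) :
    Module.Injective R M := by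
  constructor
  intro X Y _ _ _ _ φ hφ g
  obtain ⟨h, hh⟩ := hQ.out φ hφ (i.comp g)
  refine ⟨r.comp h, fun x => ?_⟩
  rw [LinearMap.comp_apply, hh x, LinearMap.comp_apply, ← LinearMap.comp_apply r i, hr]
  rfl

/-- Tachikawa: a finite dimensional algebra with finite little finitistic dimension and
infinite dominant dimension (a minimal injective resolution of `Λ` all of whose terms are
projective) is self-injective. -/
theorem stmt8 (k : Type u) (Λ : Type u) [Field k] [Ring Λ] [Algebra k Λ]
    [FiniteDimensional k Λ]
    (hfd : ∃ d : ℕ, ∀ (M : Type u) [AddCommGroup M] [Module Λ M],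
      Module.Finite Λ M → HasFinitePd Λ M → pdLE Λ d M)
    (Q : ℕ → Type u) [∀ i, AddCommGroup (Q i)] [∀ i, Module Λ (Q i)]
    (hQinj : ∀ i, Module.Injective Λ (Q i)) (hQproj : ∀ i, Module.Projective Λ (Q i))
    (ι : Λ →ₗ[Λ] Q 0) (f : ∀ i, Q i →ₗ[Λ] Q (i + 1))
    (hι : Function.Injective ι)
    (hex0 : LinearMap.ker (f 0) = LinearMap.range ι)
    (hex : ∀ i, LinearMap.ker (f (i + 1)) = LinearMap.range (f i))
    -- minimality: each image is an essential submodule of the next term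
    (hmin0 : ∀ N : Submodule Λ (Q 0), N ⊓ LinearMap.range ι = ⊥ → N = ⊥)
    (hmin : ∀ i, ∀ N : Submodule Λ (Q (i + 1)), N ⊓ LinearMap.range (f i) = ⊥ → N = ⊥) :
    Module.Injective Λ Λ := by
  classical
  obtain ⟨d, hd⟩ := hfd
  -- `k`-module structures on each `Q i`
  letI instkQ : ∀ i, Module k (Q i) := fun i => Module.compHom (Q i) (algebraMap k Λ)
  haveI instTower : ∀ i, IsScalarTower k Λ (Q i) := fun i => ⟨fun c a x => by
    show (c • a) • x = _
    rw [Algebra.smul_def, mul_smul]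
    rfl⟩
  -- each `Q i` is finitely generated
  have hQfin : ∀ i, Module.Finite Λ (Q i) := by
    intro i
    induction i with
    | zero =>
        refine finite_of_essential k Λ (Q 0) (LinearMap.range ι) ?_ hmin0
        exact Module.Finite.equiv (LinearEquiv.ofInjective ι hι)
    | succ i ih =>
        refine finite_of_essential k Λ (Q (i + 1)) (LinearMap.range (f i)) ?_ (hmin i)
        haveI := ih
        exact Module.Finite.of_surjective (f i).rangeRestrict
          (LinearMap.surjective_rangeRestrict (f i))
  -- the corestricted maps onto the kernels
  have hgmem : ∀ i (x : Q i), f i x ∈ LinearMap.ker (f (i + 1)) := by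
    intro i x
    rw [hex i]
    exact LinearMap.mem_range_self _ x
  set g : ∀ i, Q i →ₗ[Λ] ↥(LinearMap.ker (f (i + 1))) :=
    fun i => (f i).codRestrict _ (hgmem i) with hg
  have gsurj : ∀ i, Function.Surjective (g i) := by
    intro i y
    have hy : (y : Q (i + 1)) ∈ LinearMap.range (f i) := by rw [← hex i]; exact y.2
    obtain ⟨x, hx⟩ := hy
    exact ⟨x, Subtype.ext hx⟩
  have gker : ∀ i, LinearMap.ker (g i) = LinearMap.ker (f i) := fun i =>
    LinearMap.ker_codRestrict _ _ _
  -- projective dimension of the kernels grows at most linearly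
  have hpd : ∀ i, pdLE Λ i ↥(LinearMap.ker (f i)) := by
    intro i
    induction i with
    | zero =>
        show Module.Projective Λ ↥(LinearMap.ker (f 0))
        rw [hex0]
        exact Module.Projective.of_equiv (LinearEquiv.ofInjective ι hι)
    | succ i ih =>
        refine ⟨Q i, inferInstance, inferInstance, g i, hQproj i, gsurj i, ?_⟩
        rw [gker i]
        exact ih
  -- the finitistic dimension bound
  have hfinK : Module.Finite Λ ↥(LinearMap.ker (f (d + 1))) := by
    rw [hex d]
    haveI := hQfin d
    exact Module.Finite.of_surjective (f d).rangeRestrict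
      (LinearMap.surjective_rangeRestrict (f d))
  have hKpd : pdLE Λ d ↥(LinearMap.ker (f (d + 1))) :=
    hd ↥(LinearMap.ker (f (d + 1))) hfinK ⟨d + 1, hpd (d + 1)⟩
  -- descend along the resolution
  have hdesc : ∀ j, pdLE Λ j ↥(LinearMap.ker (f (j + 1))) →
      Module.Projective Λ ↥(LinearMap.ker (f 1)) := by
    intro j
    induction j with
    | zero => exact fun h => h
    | succ j ih =>
        intro h
        refine ih ?_
        haveI := hQproj (j + 1)
        have hk := pdLE_ker j h (g (j + 1)) (gsurj (j + 1))
        rw [gker (j + 1)] at hk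
        exact hk
  haveI hK1proj : Module.Projective Λ ↥(LinearMap.ker (f 1)) := hdesc d hKpd
  -- split: `Λ` is a retract of `Q 0`
  obtain ⟨s, hs⟩ := Module.projective_lifting_property (g 0) LinearMap.id (gsurj 0)
  have hmemrange : ∀ x : Q 0, x - s (g 0 x) ∈ LinearMap.range ι := by
    intro x
    rw [← hex0, LinearMap.mem_ker]
    have hgs : ∀ y, g 0 (s y) = y := fun y => by simpa using LinearMap.congr_fun hs y
    have h1 : g 0 (x - s (g 0 x)) = 0 := by
      rw [map_sub, hgs (g 0 x), sub_self]
    have h2 : (g 0 (x - s (g 0 x)) : Q 1) = f 0 (x - s (g 0 x)) := rfl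
    rw [← h2, h1]
    rfl
  set e0 : Λ ≃ₗ[Λ] ↥(LinearMap.range ι) := LinearEquiv.ofInjective ι hι with he0
  set p : Q 0 →ₗ[Λ] Q 0 := LinearMap.id - s.comp (g 0) with hp
  have hpmem : ∀ x : Q 0, p x ∈ LinearMap.range ι := fun x => hmemrange x
  set r : Q 0 →ₗ[Λ] Λ :=
    e0.symm.toLinearMap.comp (LinearMap.codRestrict (LinearMap.range ι) p hpmem) with hr
  have hri : r.comp ι = LinearMap.id := by
    apply LinearMap.ext
    intro a
    have hmem : ι a ∈ LinearMap.ker (f 0) := by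
      rw [hex0]
      exact LinearMap.mem_range_self _ a
    have hg0 : g 0 (ι a) = 0 := by
      apply Subtype.ext
      show f 0 (ι a) = 0
      exact hmem
    have hpa : p (ι a) = ι a := by
      rw [hp]
      simp only [LinearMap.sub_apply, LinearMap.id_apply, LinearMap.comp_apply, hg0,
        map_zero, sub_zero]
    show e0.symm (LinearMap.codRestrict (LinearMap.range ι) p hpmem (ι a)) = a
    apply e0.injective
    rw [LinearEquiv.apply_symm_apply]
    apply Subtype.ext
    show p (ι a) = (e0 a : Q 0)
    rw [hpa, he0]
    rfl
  exact Module.Injective.of_retract (hQinj 0) ι r hri
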